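/- Let L ≥ 1, let ρ be an n-qubit density matrix (positive semidefinite complex 2^n × 2^n matrix with trace 1), let U_1, …, U_L be unitary 2^n × 2^n matrices, and let w_1, …, w_L be nonnegative reals with ∑_{i=1}^L w_i = 1. Define σ = ∑_{i=1}^L ∑_{j=1}^L √(w_i w_j) · (E_{ij} ⊗ U_i ρ U_j†) as a Kronecker-product block matrix, where E_{ij} is the L × L matrix unit. Let Z be a Hermitian 2^n × 2^n matrix with Z² = I. Then Tr(σ · (I_L ⊗ Z)) = ∑_{i=1}^L w_i m_i, where m_i = Tr(U_i ρ U_i† Z), and Tr(σ · (I_L ⊗ Z)²) = 1; consequently the variance of the measurement of I_L ⊗ Z in the state σ, namely Tr(σ(I_L⊗Z)²) − (Tr(σ(I_L⊗Z)))², equals 1 − (∑_{i=1}^L w_i m_i)². -/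

import Mathlib

open Matrix Kronecker BigOperators
open scoped ComplexOrder

/-- The relevant diagonal block of the output density matrix of the LCU circuit
with control state `∑ i √(w i) |i⟩` and controlled unitaries `U i` applied to `ρ`. -/
noncomputable def lcuSigma {L m : ℕ} (w : Fin L → ℝ)
    (ρ : Matrix (Fin m) (Fin m) ℂ) (U : Fin L → Matrix (Fin m) (Fin m) ℂ) :
    Matrix (Fin L × Fin m) (Fin L × Fin m) ℂ :=
  ∑ i, ∑ j, (Real.sqrt (w i * w j) : ℂ) •
    (Matrix.single i j (1 : ℂ) ⊗ₖ (U i * ρ * (U j)ᴴ))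

lemma lcuSigma_trace_mul {L m : ℕ} (w : Fin L → ℝ) (hw : ∀ i, 0 ≤ w i)
    (ρ : Matrix (Fin m) (Fin m) ℂ) (U : Fin L → Matrix (Fin m) (Fin m) ℂ)
    (B : Matrix (Fin m) (Fin m) ℂ) :
    (lcuSigma w ρ U * ((1 : Matrix (Fin L) (Fin L) ℂ) ⊗ₖ B)).trace
      = ∑ i, (w i : ℂ) * (U i * ρ * (U i)ᴴ * B).trace := by
  unfold lcuSigma
  rw [Finset.sum_mul, trace_sum]
  refine Finset.sum_congr rfl fun i _ => ?_
  rw [Finset.sum_mul, trace_sum]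
  rw [Finset.sum_eq_single i]
  · rw [smul_mul_assoc, trace_smul, ← mul_kronecker_mul, mul_one,
      trace_kronecker, Matrix.trace_single_eq_same]
    rw [Real.sqrt_mul_self (hw i)]
    simp [smul_eq_mul]
  · intro j _ hj
    rw [smul_mul_assoc, trace_smul, ← mul_kronecker_mul, mul_one,
      trace_kronecker, Matrix.trace_single_eq_of_ne _ _ _ (Ne.symm hj)]
    simp
  · simp

/-- Z-measurement part of Theorem 1 (Mean and variance of the LCU estimator):
for a Hermitian `Z` with `Z² = 1`, `Tr(σ (I_L ⊗ Z)) = ∑ i w i * m i`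
with `m i = Tr(U i ρ U iᴴ Z)`, `Tr(σ (I_L ⊗ Z)²) = 1`, and hence the variance is
`1 − (∑ i w i * m i)²`. -/
theorem lcu_Z_mean_and_variance
    (L n : ℕ) (hL : 1 ≤ L)
    (ρ : Matrix (Fin (2 ^ n)) (Fin (2 ^ n)) ℂ)
    (hρ : ρ.PosSemidef) (hρtr : ρ.trace = 1)
    (U : Fin L → Matrix (Fin (2 ^ n)) (Fin (2 ^ n)) ℂ)
    (hU : ∀ i, U i ∈ Matrix.unitaryGroup (Fin (2 ^ n)) ℂ)
    (w : Fin L → ℝ) (hw : ∀ i, 0 ≤ w i) (hw1 : ∑ i, w i = 1)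
    (Z : Matrix (Fin (2 ^ n)) (Fin (2 ^ n)) ℂ)
    (hZ1 : Zᴴ = Z) (hZ2 : Z * Z = 1) :
    (lcuSigma w ρ U * ((1 : Matrix (Fin L) (Fin L) ℂ) ⊗ₖ Z)).trace
        = ∑ i, (w i : ℂ) * (U i * ρ * (U i)ᴴ * Z).trace ∧
    (lcuSigma w ρ U *
        (((1 : Matrix (Fin L) (Fin L) ℂ) ⊗ₖ Z) * ((1 : Matrix (Fin L) (Fin L) ℂ) ⊗ₖ Z))).trace
        = 1 ∧
    (lcuSigma w ρ U *
        (((1 : Matrix (Fin L) (Fin L) ℂ) ⊗ₖ Z) * ((1 : Matrix (Fin L) (Fin L) ℂ) ⊗ₖ Z))).trace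
      - ((lcuSigma w ρ U * ((1 : Matrix (Fin L) (Fin L) ℂ) ⊗ₖ Z)).trace) ^ 2
        = 1 - (∑ i, (w i : ℂ) * (U i * ρ * (U i)ᴴ * Z).trace) ^ 2 := by
  have h1 := lcuSigma_trace_mul w hw ρ U Z
  have hsq : ((1 : Matrix (Fin L) (Fin L) ℂ) ⊗ₖ Z) * ((1 : Matrix (Fin L) (Fin L) ℂ) ⊗ₖ Z)
      = (1 : Matrix (Fin L) (Fin L) ℂ) ⊗ₖ (1 : Matrix (Fin (2 ^ n)) (Fin (2 ^ n)) ℂ) := by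
    rw [← mul_kronecker_mul, one_mul, hZ2]
  have h2 : (lcuSigma w ρ U *
      (((1 : Matrix (Fin L) (Fin L) ℂ) ⊗ₖ Z) * ((1 : Matrix (Fin L) (Fin L) ℂ) ⊗ₖ Z))).trace = 1 := by
    rw [hsq, lcuSigma_trace_mul w hw ρ U 1]
    have h3 : ∀ i, (U i * ρ * (U i)ᴴ).trace = 1 := by
      intro i
      rw [Matrix.trace_mul_cycle, show (U i)ᴴ * U i = 1 from (hU i).1, one_mul, hρtr]
    simp only [mul_one, h3]
    rw [← Complex.ofReal_sum, hw1, Complex.ofReal_one]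
  exact ⟨h1, h2, by rw [h1, h2]⟩
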